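/- (Lemma 2: simplification of the re-order level computation.) Define v_{T+1} = 0 and v_n = min_{1 ≤ a ≤ T−n+1} { ℓ_{n,a} + v_{n+a} }, and let a_n be a cycle length attaining this minimum. For each a with 1 ≤ a ≤ T−n+1 for which the set { y : L_{n,a}(y) + v_{n+a} ≤ v_n } is nonempty and bounded below, put ŝ_{n,a} = inf { y : L_{n,a}(y) + v_{n+a} ≤ v_n } (the set for a = a_n is always nonempty since L_{n,a_n}(y_{n,a_n}) + v_{n+a_n} = v_n − K ≤ v_n). Then min over all admissible a of ŝ_{n,a} equals min over admissible a with 1 ≤ a ≤ a_n of ŝ_{n,a}; equivalently, for every a ≥ a_n for which ŝ_{n,a} exists, ŝ_{n,a_n} ≤ ŝ_{n,a}. -/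

import Mathlib

open MeasureTheory ProbabilityTheory

/-- Accumulated demand `ξ_{n,k} = ξ_n + ⋯ + ξ_{n+k-1}`. -/
noncomputable def acc {Ω : Type*} (ξ : ℕ → Ω → ℝ) (n k : ℕ) (ω : Ω) : ℝ :=
  ∑ i ∈ Finset.range k, ξ (n + i) ω

/-- Cumulative distribution function `φ_{n,k}(y) = P(ξ_{n,k} ≤ y)` of accumulated demand. -/
noncomputable def cdf {Ω : Type*} [MeasurableSpace Ω] (μ : Measure Ω) (ξ : ℕ → Ω → ℝ)
    (n k : ℕ) (y : ℝ) : ℝ :=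
  (μ {ω | acc ξ n k ω ≤ y}).toReal

/-- Multi-period cost function
`L_{n,a}(y) = Σ_{k=1}^{a} (h·E[(y − ξ_{n,k})⁺] + p·E[(ξ_{n,k} − y)⁺])`. -/
noncomputable def Lmp {Ω : Type*} [MeasurableSpace Ω] (μ : Measure Ω) (h p : ℝ)
    (ξ : ℕ → Ω → ℝ) (n a : ℕ) (y : ℝ) : ℝ :=
  ∑ k ∈ Finset.Icc 1 a,
    (h * ∫ ω, max (y - acc ξ n k ω) 0 ∂μ + p * ∫ ω, max (acc ξ n k ω - y) 0 ∂μ)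

lemma acc_meas {Ω : Type*} [MeasurableSpace Ω] {ξ : ℕ → Ω → ℝ}
    (hmeas : ∀ i, Measurable (ξ i)) (n k : ℕ) : Measurable (acc ξ n k) := by
  unfold acc
  exact Finset.measurable_sum _ fun i _ => hmeas (n + i)

lemma acc_int {Ω : Type*} [MeasurableSpace Ω] {μ : Measure Ω} {ξ : ℕ → Ω → ℝ}
    (hint : ∀ i, Integrable (ξ i) μ) (n k : ℕ) : Integrable (acc ξ n k) μ := by
  unfold acc
  exact integrable_finset_sum _ fun i _ => hint (n + i)

/-- Core single-period comparison: if `(h+p)·P(f < w) ≤ p` then the newsvendor cost at `w`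
is at most the cost at any `z ≤ w`. -/
lemma G_mono {Ω : Type*} [MeasurableSpace Ω] (μ : Measure Ω) [IsProbabilityMeasure μ]
    {f : Ω → ℝ} (hf : Measurable f) (hfi : Integrable f μ)
    {h p z w : ℝ} (hh : 0 < h) (hp : 0 < p) (hzw : z ≤ w)
    (hq : (h + p) * (μ {ω | f ω < w}).toReal ≤ p) :
    h * ∫ ω, max (w - f ω) 0 ∂μ + p * ∫ ω, max (f ω - w) 0 ∂μ ≤
      h * ∫ ω, max (z - f ω) 0 ∂μ + p * ∫ ω, max (f ω - z) 0 ∂μ := by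
  set A : Set Ω := {ω | f ω < w} with hA
  have hAm : MeasurableSet A := measurableSet_lt hf measurable_const
  have iwf : Integrable (fun ω => max (w - f ω) 0) μ :=
    ((integrable_const w).sub hfi).pos_part
  have izf : Integrable (fun ω => max (z - f ω) 0) μ :=
    ((integrable_const z).sub hfi).pos_part
  have ifw : Integrable (fun ω => max (f ω - w) 0) μ :=
    (hfi.sub (integrable_const w)).pos_part
  have ifz : Integrable (fun ω => max (f ω - z) 0) μ :=
    (hfi.sub (integrable_const z)).pos_part
  have iiA : Integrable (A.indicator fun _ => (w - z)) μ :=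
    (integrable_const (w - z)).indicator hAm
  have iiB : Integrable (Aᶜ.indicator fun _ => (w - z)) μ :=
    (integrable_const (w - z)).indicator hAm.compl
  have h1 : ∫ ω, max (w - f ω) 0 ∂μ ≤
      ∫ ω, (max (z - f ω) 0 + A.indicator (fun _ => (w - z)) ω) ∂μ := by
    refine integral_mono iwf (izf.add iiA) fun ω => ?_
    by_cases hω : f ω < w
    · have : A.indicator (fun _ => (w - z)) ω = w - z :=
        Set.indicator_of_mem (show ω ∈ A from hω) _
      rw [this]
      rcases le_or_gt (f ω) z with hz | hz
      · have : max (z - f ω) 0 = z - f ω := max_eq_left (by linarith)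
        rw [this]; simp only [max_le_iff]; constructor <;> linarith
      · have : max (z - f ω) 0 = 0 := max_eq_right (by linarith)
        rw [this]; simp only [max_le_iff]; constructor <;> linarith
    · have : A.indicator (fun _ => (w - z)) ω = 0 :=
        Set.indicator_of_notMem (show ω ∉ A from hω) _
      rw [this]
      have : max (w - f ω) 0 = 0 := max_eq_right (by push_neg at hω; linarith)
      rw [this]
      positivity
  have h2 : ∫ ω, (max (f ω - w) 0 + Aᶜ.indicator (fun _ => (w - z)) ω) ∂μ ≤
      ∫ ω, max (f ω - z) 0 ∂μ := by
    refine integral_mono (ifw.add iiB) ifz fun ω => ?_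
    by_cases hω : f ω < w
    · have : Aᶜ.indicator (fun _ => (w - z)) ω = 0 :=
        Set.indicator_of_notMem (show ω ∉ Aᶜ from by simpa [A] using hω) _
      rw [this]
      have : max (f ω - w) 0 = 0 := max_eq_right (by linarith)
      rw [this]
      simp only [add_zero, zero_add, le_max_iff]
      right; rfl
    · push_neg at hω
      have : Aᶜ.indicator (fun _ => (w - z)) ω = w - z :=
        Set.indicator_of_mem (show ω ∈ Aᶜ from by simpa [A] using not_lt.2 hω) _
      rw [this]
      have e1 : max (f ω - w) 0 = f ω - w := max_eq_left (by linarith)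
      have e2 : max (f ω - z) 0 = f ω - z := max_eq_left (by linarith)
      rw [e1, e2]; linarith
  rw [integral_add izf iiA, integral_indicator_const _ hAm] at h1
  rw [integral_add ifw iiB, integral_indicator_const _ hAm.compl] at h2
  have hcompl : (μ Aᶜ).toReal = 1 - (μ A).toReal := by
    rw [measure_compl hAm (measure_ne_top μ A), measure_univ,
      ENNReal.toReal_sub_of_le prob_le_one ENNReal.one_ne_top, ENNReal.toReal_one]
  have hAnn : 0 ≤ (μ A).toReal := ENNReal.toReal_nonneg
  rw [smul_eq_mul, measureReal_def] at h1 h2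
  have key : h * ((μ A).toReal * (w - z)) ≤ p * ((μ Aᶜ).toReal * (w - z)) := by
    rw [hcompl]
    nlinarith [sub_nonneg.2 hzw]
  nlinarith [mul_le_mul_of_nonneg_left h1 hh.le, mul_le_mul_of_nonneg_left h2 hp.le]

/-- If `ys` is the least point where the average of the first `an` cdfs reaches the critical
ratio, then for every `k ≥ an` the strict cdf of `ξ_{n,k}` at `ys` is below the critical ratio. -/
lemma quantile_bound {Ω : Type*} [MeasurableSpace Ω] (μ : Measure Ω) [IsProbabilityMeasure μ]
    (ξ : ℕ → Ω → ℝ) (hpos : ∀ i, ∀ᵐ ω ∂μ, 0 ≤ ξ i ω)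
    {h p : ℝ} (hh : 0 < h) (hp : 0 < p) {n an k : ℕ} (hank : an ≤ k)
    {ys : ℝ}
    (hyl : IsLeast {z : ℝ | (an : ℝ) * p / (h + p) ≤ ∑ j ∈ Finset.Icc 1 an, cdf μ ξ n j z} ys) :
    (h + p) * (μ {ω | acc ξ n k ω < ys}).toReal ≤ p := by
  by_contra hcon
  push_neg at hcon
  have hhp : (0:ℝ) < h + p := by linarith
  set ρ : ℝ := p / (h + p) with hρdef
  have hρpos : 0 < ρ := div_pos hp hhp
  have hρlt : ρ < (μ {ω | acc ξ n k ω < ys}).toReal := by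
    rw [hρdef, div_lt_iff₀ hhp]
    linarith [hcon]
  set s : ℕ → Set Ω := fun m => {ω | acc ξ n k ω ≤ ys - ((m:ℝ) + 1)⁻¹} with hs
  have hmono : Monotone s := by
    intro m m' hmm ω hω
    have h1 : ((m':ℝ) + 1)⁻¹ ≤ ((m:ℝ) + 1)⁻¹ := by
      apply inv_anti₀ (by positivity)
      exact_mod_cast by omega
    have hω' : acc ξ n k ω ≤ ys - ((m:ℝ) + 1)⁻¹ := hω
    show acc ξ n k ω ≤ ys - ((m':ℝ) + 1)⁻¹
    linarith
  have hU : (⋃ m, s m) = {ω | acc ξ n k ω < ys} := by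
    ext ω
    simp only [Set.mem_iUnion, Set.mem_setOf_eq, hs]
    constructor
    · rintro ⟨m, hm⟩
      have : (0:ℝ) < ((m:ℝ) + 1)⁻¹ := by positivity
      linarith
    · intro hω
      have h0 : 0 < ys - acc ξ n k ω := by linarith
      obtain ⟨m, hm⟩ := exists_nat_gt (ys - acc ξ n k ω)⁻¹
      refine ⟨m, ?_⟩
      have hmpos : (0:ℝ) < (m:ℝ) + 1 := by positivity
      have h2 : (ys - acc ξ n k ω)⁻¹ < (m:ℝ) + 1 := by linarith
      have h3 : ((m:ℝ) + 1)⁻¹ ≤ ys - acc ξ n k ω := by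
        rw [inv_le_comm₀ hmpos h0] at *
        · exact h2.le
      linarith
  have hmeq : μ {ω | acc ξ n k ω < ys} = ⨆ m, μ (s m) := by
    rw [← hU]
    exact hmono.directed_le.measure_iUnion
  have hlt : ENNReal.ofReal ρ < μ {ω | acc ξ n k ω < ys} :=
    (ENNReal.ofReal_lt_iff_lt_toReal hρpos.le (measure_ne_top μ _)).2 hρlt
  rw [hmeq, lt_iSup_iff] at hlt
  obtain ⟨m, hm⟩ := hlt
  set t : ℝ := ys - ((m:ℝ) + 1)⁻¹ with ht
  have htlt : t < ys := by
    have : (0:ℝ) < ((m:ℝ) + 1)⁻¹ := by positivity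
    simp only [ht]; linarith
  have hcdfk : ρ ≤ cdf μ ξ n k t :=
    ((ENNReal.ofReal_lt_iff_lt_toReal hρpos.le (measure_ne_top μ _)).1 hm).le
  have hae : ∀ᵐ ω ∂μ, ∀ i, 0 ≤ ξ i ω := ae_all_iff.2 hpos
  have hmonoj : ∀ j ∈ Finset.Icc 1 an, ρ ≤ cdf μ ξ n j t := by
    intro j hj
    rw [Finset.mem_Icc] at hj
    have hjk : j ≤ k := le_trans hj.2 hank
    have hsub : μ {ω | acc ξ n k ω ≤ t} ≤ μ {ω | acc ξ n j ω ≤ t} := by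
      apply measure_mono_ae
      filter_upwards [hae] with ω hω hmem
      have : acc ξ n j ω ≤ acc ξ n k ω := by
        unfold acc
        exact Finset.sum_le_sum_of_subset_of_nonneg
          (Finset.range_subset_range.2 hjk) (fun i _ _ => hω (n + i))
      exact le_trans this hmem
    have : cdf μ ξ n k t ≤ cdf μ ξ n j t :=
      ENNReal.toReal_mono (measure_ne_top μ _) hsub
    linarith
  have hsum : (an : ℝ) * p / (h + p) ≤ ∑ j ∈ Finset.Icc 1 an, cdf μ ξ n j t := by
    have := Finset.card_nsmul_le_sum (Finset.Icc 1 an) (fun j => cdf μ ξ n j t) ρ hmonoj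
    rw [Nat.card_Icc] at this
    simp only [Nat.add_sub_cancel, nsmul_eq_mul] at this
    calc (an : ℝ) * p / (h + p) = (an : ℝ) * ρ := by rw [hρdef, mul_div_assoc]
    _ ≤ _ := this
  have := hyl.2 hsum
  linarith

lemma Lmp_split {Ω : Type*} [MeasurableSpace Ω] (μ : Measure Ω) (h p : ℝ)
    (ξ : ℕ → Ω → ℝ) (n an a : ℕ) (hana : an ≤ a) (w : ℝ) :
    Lmp μ h p ξ n a w = Lmp μ h p ξ n an w + ∑ k ∈ Finset.Ioc an a,
      (h * ∫ ω, max (w - acc ξ n k ω) 0 ∂μ + p * ∫ ω, max (acc ξ n k ω - w) 0 ∂μ) := by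
  unfold Lmp
  rw [show Finset.Icc 1 a = Finset.Ioc 0 a from Finset.Icc_add_one_left_eq_Ioc 0 a,
    show Finset.Icc 1 an = Finset.Ioc 0 an from Finset.Icc_add_one_left_eq_Ioc 0 an]
  exact (Finset.sum_Ioc_consecutive _ (Nat.zero_le an) hana).symm
/-- Lemma 2: for every cycle length `a ≥ a_n` for which
`ŝ_{n,a} = inf {y : L_{n,a}(y) + v_{n+a} ≤ v_n}` exists, one has `ŝ_{n,a_n} ≤ ŝ_{n,a}`;
hence the re-order level computation can be restricted to `1 ≤ a ≤ a_n`. -/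
theorem stmt9 {Ω : Type*} [MeasurableSpace Ω] (μ : Measure Ω) [IsProbabilityMeasure μ]
    (T : ℕ) (hT : 1 ≤ T) (ξ : ℕ → Ω → ℝ)
    (hmeas : ∀ i, Measurable (ξ i)) (hint : ∀ i, Integrable (ξ i) μ)
    (hpos : ∀ i, ∀ᵐ ω ∂μ, 0 ≤ ξ i ω)
    (hind : iIndepFun ξ μ)
    (h p K : ℝ) (hh : 0 < h) (hp : 0 < p) (hK : 0 ≤ K)
    (y : ℕ → ℕ → ℝ)
    (hyleast : ∀ n a, 1 ≤ n → 1 ≤ a → n + a - 1 ≤ T →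
      IsLeast {z : ℝ | (a : ℝ) * p / (h + p) ≤ ∑ k ∈ Finset.Icc 1 a, cdf μ ξ n k z}
        (y n a))
    (hymin : ∀ n a, 1 ≤ n → 1 ≤ a → n + a - 1 ≤ T →
      ∀ z, Lmp μ h p ξ n a (y n a) ≤ Lmp μ h p ξ n a z)
    (v : ℕ → ℝ) (hvT : v (T + 1) = 0)
    (hv : ∀ n, 1 ≤ n → n ≤ T →
      v n = sInf {x : ℝ | ∃ a, 1 ≤ a ∧ a ≤ T - n + 1 ∧
        x = (K + Lmp μ h p ξ n a (y n a)) + v (n + a)}) :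
    ∀ n, 1 ≤ n → n ≤ T →
      ∀ an, 1 ≤ an → an ≤ T - n + 1 →
        v n = (K + Lmp μ h p ξ n an (y n an)) + v (n + an) →
        BddBelow {z : ℝ | Lmp μ h p ξ n an z + v (n + an) ≤ v n} →
        ∀ a, an ≤ a → a ≤ T - n + 1 →
          {z : ℝ | Lmp μ h p ξ n a z + v (n + a) ≤ v n}.Nonempty →
          BddBelow {z : ℝ | Lmp μ h p ξ n a z + v (n + a) ≤ v n} →
          sInf {z : ℝ | Lmp μ h p ξ n an z + v (n + an) ≤ v n} ≤
            sInf {z : ℝ | Lmp μ h p ξ n a z + v (n + a) ≤ v n} := by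
  intro n hn1 hnT an han1 hanT hveq hbdd_an a hana haT hne hbdd_a
  have ha1 : 1 ≤ a := le_trans han1 hana
  have hnanT : n + an - 1 ≤ T := by omega
  have hnaT : n + a - 1 ≤ T := by omega
  have hyleast_an := hyleast n an hn1 han1 hnanT
  have hmem_ys : y n an ∈ {z : ℝ | Lmp μ h p ξ n an z + v (n + an) ≤ v n} := by
    simp only [Set.mem_setOf_eq, hveq]
    linarith
  refine le_csInf hne fun z hz => ?_
  rcases le_or_gt (y n an) z with hzy | hzy
  · exact le_trans (csInf_le hbdd_an hmem_ys) hzy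
  · refine csInf_le hbdd_an ?_
    show Lmp μ h p ξ n an z + v (n + an) ≤ v n
    have e1 := Lmp_split μ h p ξ n an a hana z
    have e2 := Lmp_split μ h p ξ n an a hana (y n an)
    have hR : ∑ k ∈ Finset.Ioc an a,
          (h * ∫ ω, max (y n an - acc ξ n k ω) 0 ∂μ + p * ∫ ω, max (acc ξ n k ω - y n an) 0 ∂μ)
        ≤ ∑ k ∈ Finset.Ioc an a,
          (h * ∫ ω, max (z - acc ξ n k ω) 0 ∂μ + p * ∫ ω, max (acc ξ n k ω - z) 0 ∂μ) := by
      refine Finset.sum_le_sum fun k hk => ?_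
      rw [Finset.mem_Ioc] at hk
      exact G_mono μ (acc_meas hmeas n k) (acc_int hint n k) hh hp hzy.le
        (quantile_bound μ ξ hpos hh hp hk.1.le hyleast_an)
    have h1 : Lmp μ h p ξ n a z + v (n + a) ≤ v n := hz
    have h2 : v n ≤ (K + Lmp μ h p ξ n a (y n a)) + v (n + a) := by
      rw [hv n hn1 hnT]
      refine csInf_le ?_ ⟨a, ha1, haT, rfl⟩
      apply Set.Finite.bddBelow
      apply Set.Finite.subset (Set.Finite.image
        (fun a' => (K + Lmp μ h p ξ n a' (y n a')) + v (n + a')) (Set.finite_Icc 1 (T - n + 1)))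
      rintro x ⟨a', h1', h2', rfl⟩
      exact ⟨a', Set.mem_Icc.2 ⟨h1', h2'⟩, rfl⟩
    have h3 : Lmp μ h p ξ n a (y n a) ≤ Lmp μ h p ξ n a (y n an) :=
      hymin n a hn1 ha1 hnaT (y n an)
    linarith
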